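/- Suppose ⟨·,·⟩ is naturally reductive (⟨[X,Y]_𝔪,Z⟩ + ⟨Y,[X,Z]_𝔪⟩ = 0 for all X,Y,Z ∈ 𝔪). Then for every index l, the anticommutator of H with the basis vector Z_l satisfies H·Z_l + Z_l·H = −(3/2) Σ_{i,j} ⟨Z_l, [Z_i,Z_j]_𝔪⟩ Z_i·Z_j in Cl(𝔪). -/
import Mathlib


open scoped BigOperators

/-- The quadratic form `v ↦ −⟨v,v⟩` on the subspace `𝔪`, built from a bilinear form `B`
on the ambient space; the associated Clifford algebra satisfies
`v·w + w·v = −2⟨v,w⟩·1` for `v,w ∈ 𝔪`. -/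
noncomputable def mQF {𝔤 : Type*} [AddCommGroup 𝔤] [Module ℝ 𝔤]
    (𝔪 : Submodule ℝ 𝔤) (B : LinearMap.BilinForm ℝ 𝔤) : QuadraticForm ℝ ↥𝔪 :=
  LinearMap.BilinMap.toQuadraticMap ((-B).compl₁₂ 𝔪.subtype 𝔪.subtype)

/-- The cubic element `H = (1/4) Σ_{i,j,k} ⟨[Z_i,Z_j]_𝔪, Z_k⟩ Z_i·Z_j·Z_k ∈ Cl(𝔪)`. -/
noncomputable def cubicH {𝔤 : Type*} [LieRing 𝔤] [LieAlgebra ℝ 𝔤]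
    (𝔪 : Submodule ℝ 𝔤) (p𝔪 : 𝔤 →ₗ[ℝ] 𝔤) (B : LinearMap.BilinForm ℝ 𝔤)
    {n : ℕ} (Z : Fin n → 𝔤) (hZ𝔪 : ∀ i, Z i ∈ 𝔪) : CliffordAlgebra (mQF 𝔪 B) :=
  (1 / 4 : ℝ) • ∑ i, ∑ j, ∑ k, B (p𝔪 ⁅Z i, Z j⁆) (Z k) •
    (CliffordAlgebra.ι (mQF 𝔪 B) ⟨Z i, hZ𝔪 i⟩ *
      CliffordAlgebra.ι (mQF 𝔪 B) ⟨Z j, hZ𝔪 j⟩ *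
      CliffordAlgebra.ι (mQF 𝔪 B) ⟨Z k, hZ𝔪 k⟩)

/-- On a naturally reductive space, the anticommutator of the cubic
element `H` with any `Z_l` is
`H·Z_l + Z_l·H = −(3/2) Σ_{i,j} ⟨Z_l,[Z_i,Z_j]_𝔪⟩ Z_i·Z_j`. -/
theorem stmt10
    {𝔤 : Type*} [LieRing 𝔤] [LieAlgebra ℝ 𝔤] [FiniteDimensional ℝ 𝔤]
    (𝔥 𝔪 : Submodule ℝ 𝔤)
    (p𝔥 p𝔪 : 𝔤 →ₗ[ℝ] 𝔤)
    (hsum : ∀ x, p𝔥 x + p𝔪 x = x)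
    (hmem𝔥 : ∀ x, p𝔥 x ∈ 𝔥) (hmem𝔪 : ∀ x, p𝔪 x ∈ 𝔪)
    (hid𝔥 : ∀ x ∈ 𝔥, p𝔥 x = x) (hid𝔪 : ∀ x ∈ 𝔪, p𝔪 x = x)
    (hsub : ∀ x ∈ 𝔥, ∀ y ∈ 𝔥, ⁅x, y⁆ ∈ 𝔥)
    (hhm : ∀ x ∈ 𝔥, ∀ y ∈ 𝔪, ⁅x, y⁆ ∈ 𝔪)
    (B : LinearMap.BilinForm ℝ 𝔤)
    (hBsymm : ∀ x ∈ 𝔪, ∀ y ∈ 𝔪, B x y = B y x)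
    (hBpos : ∀ x ∈ 𝔪, x ≠ 0 → 0 < B x x)
    (hnat : ∀ x ∈ 𝔪, ∀ y ∈ 𝔪, ∀ z ∈ 𝔪, B (p𝔪 ⁅x, y⁆) z + B y (p𝔪 ⁅x, z⁆) = 0)
    {n : ℕ} (Z : Fin n → 𝔤) (hZ𝔪 : ∀ i, Z i ∈ 𝔪)
    (hZon : ∀ i j, B (Z i) (Z j) = if i = j then 1 else 0)
    (hZspan : Submodule.span ℝ (Set.range Z) = 𝔪) :
    ∀ l, cubicH 𝔪 p𝔪 B Z hZ𝔪 * CliffordAlgebra.ι (mQF 𝔪 B) ⟨Z l, hZ𝔪 l⟩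
        + CliffordAlgebra.ι (mQF 𝔪 B) ⟨Z l, hZ𝔪 l⟩ * cubicH 𝔪 p𝔪 B Z hZ𝔪 =
      (-(3 / 2) : ℝ) • ∑ i, ∑ j, B (Z l) (p𝔪 ⁅Z i, Z j⁆) •
        (CliffordAlgebra.ι (mQF 𝔪 B) ⟨Z i, hZ𝔪 i⟩ *
          CliffordAlgebra.ι (mQF 𝔪 B) ⟨Z j, hZ𝔪 j⟩) := by
  classical
  intro l
  set Q := mQF 𝔪 B with hQ
  set e : Fin n → CliffordAlgebra Q := fun i => CliffordAlgebra.ι Q ⟨Z i, hZ𝔪 i⟩ with he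
  set c : Fin n → Fin n → Fin n → ℝ := fun i j k => B (p𝔪 ⁅Z i, Z j⁆) (Z k) with hc
  -- symmetries of c
  have hc12 : ∀ i j k, c i j k = - c j i k := by
    intro i j k
    show B (p𝔪 ⁅Z i, Z j⁆) (Z k) = -(B (p𝔪 ⁅Z j, Z i⁆) (Z k))
    rw [← lie_skew (Z i) (Z j), map_neg, map_neg, LinearMap.neg_apply]
  have hc23 : ∀ i j k, c i j k = - c i k j := by
    intro i j k
    have h := hnat (Z i) (hZ𝔪 i) (Z j) (hZ𝔪 j) (Z k) (hZ𝔪 k)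
    have hs : B (Z j) (p𝔪 ⁅Z i, Z k⁆) = c i k j := hBsymm _ (hZ𝔪 j) _ (hmem𝔪 _)
    rw [hs] at h
    simp only [hc]
    linarith [h]
  have hcyc : ∀ i j, c i j l = c l i j := by
    intro i j
    rw [hc23 i j l, hc12 i l j]; ring
  -- Clifford relations
  have hswap : ∀ i j, e i * e j = -(e j * e i) - (if i = j then (2:ℝ) else 0) • 1 := by
    intro i j
    have h := CliffordAlgebra.ι_mul_ι_add_swap (Q := Q) ⟨Z i, hZ𝔪 i⟩ ⟨Z j, hZ𝔪 j⟩
    have hp : QuadraticMap.polar Q ⟨Z i, hZ𝔪 i⟩ ⟨Z j, hZ𝔪 j⟩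
        = -(if i = j then (2:ℝ) else 0) := by
      rw [hQ, mQF, LinearMap.BilinMap.polar_toQuadraticMap]
      simp only [LinearMap.compl₁₂_apply, Submodule.subtype_apply, LinearMap.neg_apply]
      rw [hZon, hZon]
      by_cases hij : i = j <;> simp [hij, eq_comm] <;> norm_num
    rw [hp, map_neg, Algebra.algebraMap_eq_smul_one] at h
    calc e i * e j = (e i * e j + e j * e i) - e j * e i := by abel
      _ = -((if i = j then (2:ℝ) else 0) • 1) - e j * e i := by rw [h]
      _ = -(e j * e i) - (if i = j then (2:ℝ) else 0) • 1 := by abel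
  have hmove : ∀ (x : CliffordAlgebra Q) i j, e i * (e j * x)
      = -(e j * (e i * x)) - (if i = j then (2:ℝ) else 0) • x := by
    intro x i j
    calc e i * (e j * x) = (e i * e j) * x := (mul_assoc _ _ _).symm
      _ = (-(e j * e i) - (if i = j then (2:ℝ) else 0) • 1) * x := by rw [hswap]
      _ = -(e j * (e i * x)) - (if i = j then (2:ℝ) else 0) • x := by
          rw [sub_mul, neg_mul, mul_assoc, smul_mul_assoc, one_mul]
  have htriple : ∀ i j k, (e i * e j * e k) * e l + e l * (e i * e j * e k)
      = (if l = k then (-2:ℝ) else 0) • (e i * e j)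
        + (if l = j then (2:ℝ) else 0) • (e i * e k)
        + (if l = i then (-2:ℝ) else 0) • (e j * e k) := by
    intro i j k
    have h1 : e l * (e i * e j * e k)
        = -(e i * (e j * (e k * e l)))
          - (if l = k then (2:ℝ) else 0) • (e i * e j)
          + (if l = j then (2:ℝ) else 0) • (e i * e k)
          - (if l = i then (2:ℝ) else 0) • (e j * e k) := by
      rw [mul_assoc (e i) (e j) (e k), hmove (e j * e k) l i, hmove (e k) l j,
        hswap l k]
      simp only [mul_sub, mul_neg, mul_one, smul_sub, smul_neg, mul_smul_comm,
        neg_neg, neg_sub, smul_smul]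
      module
    have h2 : (e i * e j * e k) * e l = e i * (e j * (e k * e l)) := by
      rw [mul_assoc, mul_assoc]
    rw [h1, h2]
    have hk : (if l = k then (-2:ℝ) else 0) = -(if l = k then (2:ℝ) else 0) := by
      split <;> ring
    have hi : (if l = i then (-2:ℝ) else 0) = -(if l = i then (2:ℝ) else 0) := by
      split <;> ring
    rw [hk, hi]
    module
  -- expand cubicH
  have hS : cubicH 𝔪 p𝔪 B Z hZ𝔪
      = (1 / 4 : ℝ) • ∑ i, ∑ j, ∑ k, c i j k • (e i * e j * e k) := rfl
  have el_def : CliffordAlgebra.ι (mQF 𝔪 B) ⟨Z l, hZ𝔪 l⟩ = e l := rfl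
  rw [el_def, hS]
  have step1 : ((1 / 4 : ℝ) • ∑ i, ∑ j, ∑ k, c i j k • (e i * e j * e k)) * e l
      + e l * ((1 / 4 : ℝ) • ∑ i, ∑ j, ∑ k, c i j k • (e i * e j * e k))
      = (1 / 4 : ℝ) • ∑ i, ∑ j, ∑ k, c i j k •
          ((e i * e j * e k) * e l + e l * (e i * e j * e k)) := by
    rw [smul_mul_assoc, mul_smul_comm, ← smul_add]
    congr 1
    rw [Finset.sum_mul, Finset.mul_sum, ← Finset.sum_add_distrib]
    refine Finset.sum_congr rfl fun i _ => ?_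
    rw [Finset.sum_mul, Finset.mul_sum, ← Finset.sum_add_distrib]
    refine Finset.sum_congr rfl fun j _ => ?_
    rw [Finset.sum_mul, Finset.mul_sum, ← Finset.sum_add_distrib]
    refine Finset.sum_congr rfl fun k _ => ?_
    rw [smul_mul_assoc, mul_smul_comm, ← smul_add]
  rw [step1]
  have step2 : (∑ i, ∑ j, ∑ k, c i j k •
        ((e i * e j * e k) * e l + e l * (e i * e j * e k)))
      = (∑ i, ∑ j, c i j l • ((-2:ℝ) • (e i * e j)))
        + (∑ i, ∑ j, c i l j • ((2:ℝ) • (e i * e j)))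
        + (∑ i, ∑ j, c l i j • ((-2:ℝ) • (e i * e j))) := by
    simp only [htriple, smul_add, Finset.sum_add_distrib]
    congr 1
    congr 1
    · refine Finset.sum_congr rfl fun i _ => Finset.sum_congr rfl fun j _ => ?_
      simp only [ite_smul, zero_smul, smul_ite, smul_zero, Finset.sum_ite_eq,
        Finset.mem_univ, if_true]
    · refine Finset.sum_congr rfl fun i _ => ?_
      rw [Finset.sum_comm]
      simp only [ite_smul, zero_smul, smul_ite, smul_zero, Finset.sum_ite_eq,
        Finset.mem_univ, if_true]
    · simp only [ite_smul, zero_smul, smul_ite, smul_zero, Finset.sum_ite_irrel,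
        Finset.sum_const_zero, Finset.sum_ite_eq, Finset.mem_univ, if_true]
  rw [step2]
  simp only [smul_add, Finset.smul_sum, ← Finset.sum_add_distrib]
  refine Finset.sum_congr rfl fun i _ => Finset.sum_congr rfl fun j _ => ?_
  have hBl : B (Z l) (p𝔪 ⁅Z i, Z j⁆) = c l i j := by
    rw [hBsymm _ (hZ𝔪 l) _ (hmem𝔪 _)]
    exact hcyc i j
  show (1 / 4 : ℝ) • (c i j l • ((-2:ℝ) • (e i * e j)))
      + (1 / 4 : ℝ) • (c i l j • ((2:ℝ) • (e i * e j)))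
      + (1 / 4 : ℝ) • (c l i j • ((-2:ℝ) • (e i * e j)))
    = (-(3 / 2) : ℝ) • (B (Z l) (p𝔪 ⁅Z i, Z j⁆) • (e i * e j))
  rw [hBl, hc23 i l j, hcyc i j]
  module
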